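/- arXiv:1912.13248 — 2 statements merged into one kernel-verified Lean document; each statement's English description precedes it below -/
import Mathlib

section
/- For the one-step binomial Euler scheme X̄ = x + σ_n(x) ξ √τ with ξ a d-dimensional vector of i.i.d. ±1 random variables with probability 1/2 each, and φ : ℝ^d → ℝ Lipschitz with constant L, the quantity Z := (1/τ) E[φ(X̄) σ_n^{-T}(x) ξ √τ] satisfies |Z| ≤ ‖σ_n‖_∞ ‖σ_n^{-T}‖_∞ L d², where |·| denotes the ℓ¹ norm. -/
open Finset

lemma sum_sign_zero' {d : ℕ} (k : Fin d) :
    ∑ ω : Fin d → Bool, (if ω k then (1:ℝ) else -1) = 0 := by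
  apply Finset.sum_involution (fun ω _ => Function.update ω k (!ω k))
  · intro ω _; by_cases h : ω k <;> simp [h]
  · intro ω _ _ hEq
    have := congrFun hEq k
    simp at this
  · intro ω _
    funext j
    by_cases h : j = k
    · subst h; simp
    · simp [Function.update_of_ne h]
  · intro ω _
    exact Finset.mem_univ _

lemma sum_mulVec_sign_zero {d : ℕ} (M : Matrix (Fin d) (Fin d) ℝ) (i : Fin d) :
    ∑ ω : Fin d → Bool, M.mulVec (fun k => if ω k then (1:ℝ) else -1) i = 0 := by
  simp only [Matrix.mulVec, dotProduct]
  rw [Finset.sum_comm]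
  apply Finset.sum_eq_zero
  intro k _
  rw [← Finset.mul_sum, sum_sign_zero', mul_zero]

/-- ℓ¹-bound on Z = (1/τ) E[φ(X̄) σ_n^{-T}(x) ξ √τ] for the one-step
binomial Euler scheme X̄ = x + σ_n(x) ξ √τ, ξ having i.i.d. ±1 components
(modelled exactly by averaging over all sign patterns ω : Fin d → Bool). -/
theorem one_step_Z_bound {d : ℕ} (τ L CS CSinv : ℝ) (hτ : 0 < τ) (hL : 0 ≤ L)
    (x : Fin d → ℝ) (S Sinv : Matrix (Fin d) (Fin d) ℝ)
    (hS : ∀ v : Fin d → ℝ, ∑ i, |S.mulVec v i| ≤ CS * ∑ i, |v i|)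
    (hSinv : ∀ v : Fin d → ℝ, ∑ i, |Sinv.mulVec v i| ≤ CSinv * ∑ i, |v i|)
    (φ : (Fin d → ℝ) → ℝ)
    (hφ : ∀ y z : Fin d → ℝ, |φ y - φ z| ≤ L * ∑ i, |y i - z i|) :
    ∑ i, |(1 / τ) *
        ((∑ ω : Fin d → Bool,
            φ (fun j => x j + Real.sqrt τ * S.mulVec (fun k => if ω k then 1 else -1) j) *
              (Sinv.mulVec (fun k => if ω k then 1 else -1) i * Real.sqrt τ)) / 2 ^ d)|
      ≤ CS * CSinv * L * (d : ℝ) ^ 2 := by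
  rcases Nat.eq_zero_or_pos d with hd | hd
  · subst hd; simp
  -- notation
  set ξ : (Fin d → Bool) → Fin d → ℝ := fun ω k => if ω k then (1:ℝ) else -1 with hξ
  have hξabs : ∀ ω, ∑ k, |ξ ω k| = (d : ℝ) := by
    intro ω
    have : ∀ k, |ξ ω k| = 1 := by
      intro k; by_cases h : ω k <;> simp [hξ, h]
    simp [this]
  have hsqrt : (0:ℝ) ≤ Real.sqrt τ := Real.sqrt_nonneg τ
  have hsq : Real.sqrt τ * Real.sqrt τ = τ := Real.mul_self_sqrt hτ.le
  -- CS, CSinv nonneg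
  have hd' : (0:ℝ) < d := by exact_mod_cast hd
  have hCS : 0 ≤ CS := by
    have h1 := hS (fun _ => 1)
    have h2 : (0:ℝ) ≤ ∑ i, |S.mulVec (fun _ => 1) i| :=
      Finset.sum_nonneg fun i _ => abs_nonneg _
    simp only [abs_one, Finset.sum_const, card_univ, Fintype.card_fin, nsmul_eq_mul,
      mul_one] at h1
    nlinarith
  have hCSinv : 0 ≤ CSinv := by
    have h1 := hSinv (fun _ => 1)
    have h2 : (0:ℝ) ≤ ∑ i, |Sinv.mulVec (fun _ => 1) i| :=
      Finset.sum_nonneg fun i _ => abs_nonneg _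
    simp only [abs_one, Finset.sum_const, card_univ, Fintype.card_fin, nsmul_eq_mul,
      mul_one] at h1
    nlinarith
  -- per-ω Lipschitz bound
  have hφΔ : ∀ ω : Fin d → Bool,
      |φ (fun j => x j + Real.sqrt τ * S.mulVec (ξ ω) j) - φ x|
        ≤ L * (Real.sqrt τ * (CS * d)) := by
    intro ω
    calc |φ (fun j => x j + Real.sqrt τ * S.mulVec (ξ ω) j) - φ x|
        ≤ L * ∑ j, |x j + Real.sqrt τ * S.mulVec (ξ ω) j - x j| := hφ _ _
      _ = L * (Real.sqrt τ * ∑ j, |S.mulVec (ξ ω) j|) := by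
          congr 1
          rw [Finset.mul_sum]
          apply Finset.sum_congr rfl
          intro j _
          rw [add_sub_cancel_left, abs_mul, abs_of_nonneg hsqrt]
      _ ≤ L * (Real.sqrt τ * (CS * d)) := by
          apply mul_le_mul_of_nonneg_left _ hL
          apply mul_le_mul_of_nonneg_left _ hsqrt
          calc ∑ j, |S.mulVec (ξ ω) j| ≤ CS * ∑ k, |ξ ω k| := hS _
            _ = CS * d := by rw [hξabs]
  -- per-ω bound on Σ_i |Sinv ξ i|
  have hc : ∀ ω : Fin d → Bool, ∑ i, |Sinv.mulVec (ξ ω) i| ≤ CSinv * d := by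
    intro ω
    calc ∑ i, |Sinv.mulVec (ξ ω) i| ≤ CSinv * ∑ k, |ξ ω k| := hSinv _
      _ = CSinv * d := by rw [hξabs]
  -- subtract the mean
  have hcenter : ∀ i : Fin d,
      (∑ ω : Fin d → Bool,
          φ (fun j => x j + Real.sqrt τ * S.mulVec (ξ ω) j) *
            (Sinv.mulVec (ξ ω) i * Real.sqrt τ))
        = ∑ ω : Fin d → Bool,
            (φ (fun j => x j + Real.sqrt τ * S.mulVec (ξ ω) j) - φ x) *
              (Sinv.mulVec (ξ ω) i * Real.sqrt τ) := by
    intro i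
    rw [eq_comm]
    simp only [sub_mul, Finset.sum_sub_distrib]
    have : ∑ ω : Fin d → Bool, φ x * (Sinv.mulVec (ξ ω) i * Real.sqrt τ) = 0 := by
      rw [← Finset.mul_sum]
      have h0 : ∑ ω : Fin d → Bool, Sinv.mulVec (ξ ω) i * Real.sqrt τ = 0 := by
        rw [← Finset.sum_mul, sum_mulVec_sign_zero, zero_mul]
      rw [h0, mul_zero]
    rw [this, sub_zero]
  -- main estimate
  have key : ∀ i : Fin d,
      |∑ ω : Fin d → Bool,
          φ (fun j => x j + Real.sqrt τ * S.mulVec (ξ ω) j) *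
            (Sinv.mulVec (ξ ω) i * Real.sqrt τ)|
        ≤ ∑ ω : Fin d → Bool,
            (L * (Real.sqrt τ * (CS * d))) * (|Sinv.mulVec (ξ ω) i| * Real.sqrt τ) := by
    intro i
    rw [hcenter i]
    refine (Finset.abs_sum_le_sum_abs _ _).trans (Finset.sum_le_sum fun ω _ => ?_)
    rw [abs_mul, abs_mul, abs_of_nonneg hsqrt]
    apply mul_le_mul_of_nonneg_right (hφΔ ω)
    positivity
  calc ∑ i, |(1 / τ) *
        ((∑ ω : Fin d → Bool,
            φ (fun j => x j + Real.sqrt τ * S.mulVec (ξ ω) j) *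
              (Sinv.mulVec (ξ ω) i * Real.sqrt τ)) / 2 ^ d)|
      = (1 / τ) / 2 ^ d * ∑ i, |∑ ω : Fin d → Bool,
            φ (fun j => x j + Real.sqrt τ * S.mulVec (ξ ω) j) *
              (Sinv.mulVec (ξ ω) i * Real.sqrt τ)| := by
        rw [Finset.mul_sum]
        apply Finset.sum_congr rfl
        intro i _
        rw [abs_mul, abs_div, abs_div, abs_one, abs_of_pos hτ,
          abs_of_pos (by positivity : (0:ℝ) < (2:ℝ) ^ d)]
        ring
    _ ≤ (1 / τ) / 2 ^ d * ∑ i, ∑ ω : Fin d → Bool,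
            (L * (Real.sqrt τ * (CS * d))) * (|Sinv.mulVec (ξ ω) i| * Real.sqrt τ) := by
        apply mul_le_mul_of_nonneg_left _ (by positivity)
        exact Finset.sum_le_sum fun i _ => key i
    _ = (1 / τ) / 2 ^ d * ∑ ω : Fin d → Bool,
            (L * (Real.sqrt τ * (CS * d))) * (Real.sqrt τ * ∑ i, |Sinv.mulVec (ξ ω) i|) := by
        rw [Finset.sum_comm]
        congr 1
        apply Finset.sum_congr rfl
        intro ω _
        rw [Finset.mul_sum, Finset.mul_sum]
        apply Finset.sum_congr rfl
        intro i _
        ring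
    _ ≤ (1 / τ) / 2 ^ d * ∑ ω : Fin d → Bool,
            (L * (Real.sqrt τ * (CS * d))) * (Real.sqrt τ * (CSinv * d)) := by
        apply mul_le_mul_of_nonneg_left _ (by positivity)
        apply Finset.sum_le_sum
        intro ω _
        apply mul_le_mul_of_nonneg_left _ (by positivity)
        exact mul_le_mul_of_nonneg_left (hc ω) hsqrt
    _ = CS * CSinv * L * (d : ℝ) ^ 2 := by
        have hval : L * (Real.sqrt τ * (CS * d)) * (Real.sqrt τ * (CSinv * d))
            = τ * (CS * CSinv * L * (d:ℝ) ^ 2) := by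
          linear_combination (CS * CSinv * L * (d:ℝ) ^ 2) * hsq
        rw [Finset.sum_const, card_univ]
        simp only [Fintype.card_fun, Fintype.card_fin, Fintype.card_bool, nsmul_eq_mul]
        rw [hval]
        push_cast
        have h2d : ((2:ℝ)) ^ d ≠ 0 := by positivity
        field_simp
end

section
/- Monotonicity of the one-step scheme: if φ_1, φ_2 : ℝ^d → ℝ are uniformly Lipschitz with 0 ≤ φ_1 − φ_2 ≤ C, then for the binomial one-step Euler scheme X̄ = x + σ_n(x)ξ√τ: E[φ_1(X̄)] + τ H(t_n, x, (1/τ)E[φ_1(X̄)σ_n^{-T}(x)ξ√τ], p) ≥ E[φ_2(X̄)] + τ H(t_n, x, (1/τ)E[φ_2(X̄)σ_n^{-T}(x)ξ√τ], p) − C' τ √τ, where C' depends only on the data. -/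
open Finset

/-- The binomial random-walk increment associated with a sign pattern. -/
noncomputable def rwInc {d : ℕ} (ω : Fin d → Bool) : Fin d → ℝ :=
  fun k => if ω k then 1 else -1

/-- Expectation w.r.t. the uniform distribution on sign patterns (i.i.d. ±1). -/
noncomputable def Emean {d : ℕ} (f : (Fin d → Bool) → ℝ) : ℝ :=
  (∑ ω : Fin d → Bool, f ω) / 2 ^ d

/-- One step of the binomial Euler scheme: X̄ = x + σ_n(x) ξ √τ. -/
noncomputable def Xbar {d : ℕ} (S : (Fin d → ℝ) → Matrix (Fin d) (Fin d) ℝ)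
    (τ : ℝ) (x : Fin d → ℝ) (ω : Fin d → Bool) : Fin d → ℝ :=
  fun j => x j + Real.sqrt τ * (S x).mulVec (rwInc ω) j

/-- Z = (1/τ) E[φ(X̄) σ_n^{-T}(x) ξ √τ]. -/
noncomputable def Zvec {d : ℕ} (S Sinv : (Fin d → ℝ) → Matrix (Fin d) (Fin d) ℝ)
    (τ : ℝ) (x : Fin d → ℝ) (φ : (Fin d → ℝ) → ℝ) : Fin d → ℝ :=
  fun i => (1 / τ) *
    Emean (fun ω => φ (Xbar S τ x ω) * ((Sinv x).mulVec (rwInc ω) i * Real.sqrt τ))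

lemma abs_rwInc {d : ℕ} (ω : Fin d → Bool) (k : Fin d) : |rwInc ω k| = 1 := by
  unfold rwInc; split <;> simp

lemma sum_abs_rwInc {d : ℕ} (ω : Fin d → Bool) : ∑ k, |rwInc ω k| = (d : ℝ) := by
  simp [abs_rwInc]

lemma sum_rwInc {d : ℕ} (k : Fin d) : ∑ ω : Fin d → Bool, rwInc ω k = 0 := by
  classical
  apply Finset.sum_ninvolution (fun ω => Function.update ω k (!ω k))
  · intro ω
    simp only [rwInc, Function.update_self]
    cases h : ω k <;> simp [h]
  · intro ω _ hc
    have := congrFun hc k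
    simp at this
  · intro ω; exact Finset.mem_univ _
  · intro ω
    funext j
    by_cases hj : j = k
    · subst hj; simp
    · simp [Function.update_of_ne hj]

/-- monotonicity of the one-step scheme: if 0 ≤ φ₁ - φ₂ ≤ C₀ then the
one-step values are ordered up to an error C' τ √τ, with C' depending only on the data. -/
theorem scheme_monotonicity {d I : ℕ}
    (H : ℝ → (Fin d → ℝ) → (Fin d → ℝ) → (Fin I → ℝ) → ℝ)
    (CH C0 Lφ CS CSinv : ℝ) (hCH : 0 < CH) (hC0 : 0 < C0)
    (hH : ∀ t x z z' p, |H t x z p - H t x z' p| ≤ CH * ∑ i, |z i - z' i|)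
    (S Sinv : (Fin d → ℝ) → Matrix (Fin d) (Fin d) ℝ)
    (hS : ∀ x v, ∑ i, |(S x).mulVec v i| ≤ CS * ∑ i, |v i|)
    (hSinv : ∀ x v, ∑ i, |(Sinv x).mulVec v i| ≤ CSinv * ∑ i, |v i|)
    (φ1 φ2 : (Fin d → ℝ) → ℝ)
    (hLip1 : ∀ y z : Fin d → ℝ, |φ1 y - φ1 z| ≤ Lφ * ∑ i, |y i - z i|)
    (hLip2 : ∀ y z : Fin d → ℝ, |φ2 y - φ2 z| ≤ Lφ * ∑ i, |y i - z i|)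
    (hdiff : ∀ y, 0 ≤ φ1 y - φ2 y ∧ φ1 y - φ2 y ≤ C0) :
    ∃ C' > 0, ∀ τ : ℝ, 0 < τ → ∀ tn : ℝ, ∀ x : Fin d → ℝ, ∀ p ∈ stdSimplex ℝ (Fin I),
      Emean (fun ω => φ1 (Xbar S τ x ω)) + τ * H tn x (Zvec S Sinv τ x φ1) p
        ≥ Emean (fun ω => φ2 (Xbar S τ x ω)) + τ * H tn x (Zvec S Sinv τ x φ2) p
          - C' * τ * Real.sqrt τ := by
  classical
  have hd0 : (0:ℝ) ≤ (d:ℝ) := Nat.cast_nonneg d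
  set K : ℝ := (2 * |Lφ| * (|CS| * (d:ℝ))) * (|CSinv| * (d:ℝ)) with hKdef
  have hK0 : 0 ≤ K := by positivity
  set M : ℝ := CH*(|CSinv| * (d:ℝ)) + 1 with hMdef
  have hM1 : 1 ≤ M := by
    have h0 : 0 ≤ CH*(|CSinv| * (d:ℝ)) := mul_nonneg hCH.le (by positivity)
    simp only [hMdef]; linarith
  have hCKM : 0 ≤ CH*K*M := mul_nonneg (mul_nonneg hCH.le hK0) (by linarith)
  refine ⟨CH*K*M + 1, by linarith, ?_⟩
  intro τ hτ tn x p hp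
  have hst0 : 0 < Real.sqrt τ := Real.sqrt_pos.mpr hτ
  have hττ : Real.sqrt τ * Real.sqrt τ = τ := Real.mul_self_sqrt hτ.le
  have hpow : (0:ℝ) < 2^d := by positivity
  set Z1 := Zvec S Sinv τ x φ1 with hZ1def
  set Z2 := Zvec S Sinv τ x φ2 with hZ2def
  -- zero mean
  have hm0 : ∀ i : Fin d, ∑ ω : Fin d → Bool, (Sinv x).mulVec (rwInc ω) i = 0 := by
    intro i
    simp only [Matrix.mulVec, dotProduct]
    rw [Finset.sum_comm]
    exact Finset.sum_eq_zero fun k _ => by rw [← Finset.mul_sum, sum_rwInc, mul_zero]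
  -- matrix bounds
  have hSinvb : ∀ ω : Fin d → Bool, ∑ i, |(Sinv x).mulVec (rwInc ω) i| ≤ |CSinv| * d := by
    intro ω
    calc ∑ i, |(Sinv x).mulVec (rwInc ω) i| ≤ CSinv * ∑ k, |rwInc ω k| := hSinv x _
      _ = CSinv * d := by rw [sum_abs_rwInc]
      _ ≤ |CSinv| * d := mul_le_mul_of_nonneg_right (le_abs_self CSinv) hd0
  have hSb : ∀ ω : Fin d → Bool, ∑ j, |(S x).mulVec (rwInc ω) j| ≤ |CS| * d := by
    intro ω
    calc ∑ j, |(S x).mulVec (rwInc ω) j| ≤ CS * ∑ k, |rwInc ω k| := hS x _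
      _ = CS * d := by rw [sum_abs_rwInc]
      _ ≤ |CS| * d := mul_le_mul_of_nonneg_right (le_abs_self CS) hd0
  -- distance of Xbar from x
  have hXd : ∀ ω : Fin d → Bool, ∑ j, |Xbar S τ x ω j - x j| ≤ Real.sqrt τ * (|CS| * d) := by
    intro ω
    have he : ∀ j, Xbar S τ x ω j - x j = Real.sqrt τ * (S x).mulVec (rwInc ω) j := by
      intro j; simp only [Xbar]; ring
    calc ∑ j, |Xbar S τ x ω j - x j| = Real.sqrt τ * ∑ j, |(S x).mulVec (rwInc ω) j| := by
          rw [Finset.mul_sum]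
          refine Finset.sum_congr rfl fun j _ => ?_
          rw [he j, abs_mul, abs_of_nonneg (Real.sqrt_nonneg τ)]
      _ ≤ Real.sqrt τ * (|CS| * d) := mul_le_mul_of_nonneg_left (hSb ω) (Real.sqrt_nonneg τ)
  -- Lipschitz bound on the difference
  have hψc : ∀ ω : Fin d → Bool,
      |(φ1 (Xbar S τ x ω) - φ2 (Xbar S τ x ω)) - (φ1 x - φ2 x)|
        ≤ Real.sqrt τ * (2 * |Lφ| * (|CS| * (d:ℝ))) := by
    intro ω
    have hsum0 : 0 ≤ ∑ j, |Xbar S τ x ω j - x j| := Finset.sum_nonneg fun j _ => abs_nonneg _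
    have h1 : |φ1 (Xbar S τ x ω) - φ1 x| ≤ |Lφ| * (Real.sqrt τ * (|CS| * (d:ℝ))) := by
      calc |φ1 (Xbar S τ x ω) - φ1 x| ≤ Lφ * ∑ j, |Xbar S τ x ω j - x j| := hLip1 _ _
        _ ≤ |Lφ| * ∑ j, |Xbar S τ x ω j - x j| :=
            mul_le_mul_of_nonneg_right (le_abs_self Lφ) hsum0
        _ ≤ |Lφ| * (Real.sqrt τ * (|CS| * (d:ℝ))) :=
            mul_le_mul_of_nonneg_left (hXd ω) (abs_nonneg Lφ)
    have h2 : |φ2 (Xbar S τ x ω) - φ2 x| ≤ |Lφ| * (Real.sqrt τ * (|CS| * (d:ℝ))) := by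
      calc |φ2 (Xbar S τ x ω) - φ2 x| ≤ Lφ * ∑ j, |Xbar S τ x ω j - x j| := hLip2 _ _
        _ ≤ |Lφ| * ∑ j, |Xbar S τ x ω j - x j| :=
            mul_le_mul_of_nonneg_right (le_abs_self Lφ) hsum0
        _ ≤ |Lφ| * (Real.sqrt τ * (|CS| * (d:ℝ))) :=
            mul_le_mul_of_nonneg_left (hXd ω) (abs_nonneg Lφ)
    have heq : (φ1 (Xbar S τ x ω) - φ2 (Xbar S τ x ω)) - (φ1 x - φ2 x)
        = (φ1 (Xbar S τ x ω) - φ1 x) - (φ2 (Xbar S τ x ω) - φ2 x) := by ring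
    rw [heq]
    calc |(φ1 (Xbar S τ x ω) - φ1 x) - (φ2 (Xbar S τ x ω) - φ2 x)|
        ≤ |φ1 (Xbar S τ x ω) - φ1 x| + |φ2 (Xbar S τ x ω) - φ2 x| := abs_sub _ _
      _ ≤ Real.sqrt τ * (2 * |Lφ| * (|CS| * (d:ℝ))) := by linarith
  -- key representation: √τ (Z1 i - Z2 i)
  have hZseq : ∀ i : Fin d, Real.sqrt τ * (Z1 i - Z2 i)
      = (∑ ω : Fin d → Bool,
          (φ1 (Xbar S τ x ω) - φ2 (Xbar S τ x ω)) * (Sinv x).mulVec (rwInc ω) i) / 2^d := by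
    intro i
    rw [hZ1def, hZ2def]
    simp only [Zvec, Emean]
    have h1 : (∑ ω : Fin d → Bool,
          φ1 (Xbar S τ x ω) * ((Sinv x).mulVec (rwInc ω) i * Real.sqrt τ))
        - (∑ ω : Fin d → Bool,
          φ2 (Xbar S τ x ω) * ((Sinv x).mulVec (rwInc ω) i * Real.sqrt τ))
        = Real.sqrt τ * ∑ ω : Fin d → Bool,
          (φ1 (Xbar S τ x ω) - φ2 (Xbar S τ x ω)) * (Sinv x).mulVec (rwInc ω) i := by
      rw [← Finset.sum_sub_distrib, Finset.mul_sum]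
      exact Finset.sum_congr rfl fun ω _ => by ring
    rw [show (1/τ) * ((∑ ω : Fin d → Bool,
          φ1 (Xbar S τ x ω) * ((Sinv x).mulVec (rwInc ω) i * Real.sqrt τ)) / 2^d)
        - (1/τ) * ((∑ ω : Fin d → Bool,
          φ2 (Xbar S τ x ω) * ((Sinv x).mulVec (rwInc ω) i * Real.sqrt τ)) / 2^d)
        = (1/τ) * (((∑ ω : Fin d → Bool,
          φ1 (Xbar S τ x ω) * ((Sinv x).mulVec (rwInc ω) i * Real.sqrt τ))
          - (∑ ω : Fin d → Bool,
          φ2 (Xbar S τ x ω) * ((Sinv x).mulVec (rwInc ω) i * Real.sqrt τ))) / 2^d) from by ring,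
      h1]
    field_simp
    linear_combination ((∑ ω : Fin d → Bool,
      (φ1 (Xbar S τ x ω) - φ2 (Xbar S τ x ω)) * (Sinv x).mulVec (rwInc ω) i)) * hττ
  have hZseqc : ∀ i : Fin d, Real.sqrt τ * (Z1 i - Z2 i)
      = (∑ ω : Fin d → Bool,
          ((φ1 (Xbar S τ x ω) - φ2 (Xbar S τ x ω)) - (φ1 x - φ2 x))
            * (Sinv x).mulVec (rwInc ω) i) / 2^d := by
    intro i
    rw [hZseq i]
    congr 1
    rw [show ∑ ω : Fin d → Bool,
          ((φ1 (Xbar S τ x ω) - φ2 (Xbar S τ x ω)) - (φ1 x - φ2 x))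
            * (Sinv x).mulVec (rwInc ω) i
        = (∑ ω : Fin d → Bool,
            (φ1 (Xbar S τ x ω) - φ2 (Xbar S τ x ω)) * (Sinv x).mulVec (rwInc ω) i)
          - (φ1 x - φ2 x) * ∑ ω : Fin d → Bool, (Sinv x).mulVec (rwInc ω) i from by
        rw [Finset.mul_sum, ← Finset.sum_sub_distrib]
        exact Finset.sum_congr rfl fun ω _ => by ring,
      hm0 i, mul_zero, sub_zero]
  have hDa : ∑ i, |Z1 i - Z2 i| ≤ K := by
    have h : Real.sqrt τ * ∑ i, |Z1 i - Z2 i| ≤ Real.sqrt τ * K := by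
      calc Real.sqrt τ * ∑ i, |Z1 i - Z2 i|
          = ∑ i, |Real.sqrt τ * (Z1 i - Z2 i)| := by
            rw [Finset.mul_sum]
            exact Finset.sum_congr rfl fun i _ => by rw [abs_mul, abs_of_nonneg hst0.le]
        _ ≤ ∑ i : Fin d, (∑ ω : Fin d → Bool,
              (Real.sqrt τ * (2 * |Lφ| * (|CS| * (d:ℝ)))) * |(Sinv x).mulVec (rwInc ω) i|) / 2^d := by
            refine Finset.sum_le_sum fun i _ => ?_
            rw [hZseqc i, abs_div, abs_of_pos hpow]
            gcongr
            refine (Finset.abs_sum_le_sum_abs _ _).trans (Finset.sum_le_sum fun ω _ => ?_)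
            rw [abs_mul]
            exact mul_le_mul_of_nonneg_right (hψc ω) (abs_nonneg _)
        _ = (Real.sqrt τ * (2 * |Lφ| * (|CS| * (d:ℝ))))
              * ((∑ ω : Fin d → Bool, ∑ i : Fin d, |(Sinv x).mulVec (rwInc ω) i|) / 2^d) := by
            rw [← Finset.sum_div, Finset.sum_comm]
            rw [show ∑ ω : Fin d → Bool, ∑ i : Fin d,
                  (Real.sqrt τ * (2 * |Lφ| * (|CS| * (d:ℝ)))) * |(Sinv x).mulVec (rwInc ω) i|
                = (Real.sqrt τ * (2 * |Lφ| * (|CS| * (d:ℝ))))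
                  * ∑ ω : Fin d → Bool, ∑ i : Fin d, |(Sinv x).mulVec (rwInc ω) i| from by
              rw [Finset.mul_sum]
              exact Finset.sum_congr rfl fun ω _ => by rw [Finset.mul_sum]]
            rw [mul_div_assoc]
        _ ≤ (Real.sqrt τ * (2 * |Lφ| * (|CS| * (d:ℝ))))
              * ((∑ _ω : Fin d → Bool, (|CSinv| * (d:ℝ))) / 2^d) := by
            gcongr with ω hω
            exact hSinvb ω
        _ = Real.sqrt τ * K := by
            rw [Finset.sum_const, Finset.card_univ, nsmul_eq_mul]
            rw [show ((Fintype.card (Fin d → Bool) : ℝ)) = 2^d from by simp]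
            rw [hKdef]
            field_simp
    exact le_of_mul_le_mul_left h hst0
  have hDb : Real.sqrt τ * ∑ i, |Z1 i - Z2 i|
      ≤ (|CSinv| * (d:ℝ))
        * ((∑ ω : Fin d → Bool, (φ1 (Xbar S τ x ω) - φ2 (Xbar S τ x ω))) / 2^d) := by
    calc Real.sqrt τ * ∑ i, |Z1 i - Z2 i|
        = ∑ i, |Real.sqrt τ * (Z1 i - Z2 i)| := by
          rw [Finset.mul_sum]
          exact Finset.sum_congr rfl fun i _ => by rw [abs_mul, abs_of_nonneg hst0.le]
      _ ≤ ∑ i : Fin d, (∑ ω : Fin d → Bool,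
            (φ1 (Xbar S τ x ω) - φ2 (Xbar S τ x ω)) * |(Sinv x).mulVec (rwInc ω) i|) / 2^d := by
          refine Finset.sum_le_sum fun i _ => ?_
          rw [hZseq i, abs_div, abs_of_pos hpow]
          gcongr
          refine (Finset.abs_sum_le_sum_abs _ _).trans (Finset.sum_le_sum fun ω _ => ?_)
          exact le_of_eq (by rw [abs_mul, abs_of_nonneg (hdiff _).1])
      _ = (∑ ω : Fin d → Bool, (φ1 (Xbar S τ x ω) - φ2 (Xbar S τ x ω))
            * ∑ i : Fin d, |(Sinv x).mulVec (rwInc ω) i|) / 2^d := by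
          rw [← Finset.sum_div, Finset.sum_comm]
          congr 1
          exact Finset.sum_congr rfl fun ω _ => (Finset.mul_sum _ _ _).symm
      _ ≤ (∑ ω : Fin d → Bool, (φ1 (Xbar S τ x ω) - φ2 (Xbar S τ x ω))
            * (|CSinv| * (d:ℝ))) / 2^d := by
          gcongr with ω hω
          · exact (hdiff _).1
          · exact hSinvb ω
      _ = (|CSinv| * (d:ℝ))
            * ((∑ ω : Fin d → Bool, (φ1 (Xbar S τ x ω) - φ2 (Xbar S τ x ω))) / 2^d) := by
          rw [← Finset.sum_mul]
          ring
  have hE : Emean (fun ω => φ1 (Xbar S τ x ω)) - Emean (fun ω => φ2 (Xbar S τ x ω))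
      = (∑ ω : Fin d → Bool, (φ1 (Xbar S τ x ω) - φ2 (Xbar S τ x ω))) / 2^d := by
    simp only [Emean]
    rw [div_sub_div_same, ← Finset.sum_sub_distrib]
  have hA0 : 0 ≤ ∑ ω : Fin d → Bool, (φ1 (Xbar S τ x ω) - φ2 (Xbar S τ x ω)) :=
    Finset.sum_nonneg fun ω _ => (hdiff _).1
  have hHb : H tn x Z2 p - H tn x Z1 p ≤ CH * ∑ i, |Z1 i - Z2 i| := by
    calc H tn x Z2 p - H tn x Z1 p ≤ |H tn x Z2 p - H tn x Z1 p| := le_abs_self _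
      _ ≤ CH * ∑ i, |Z2 i - Z1 i| := hH tn x Z2 Z1 p
      _ = CH * ∑ i, |Z1 i - Z2 i| := by
          congr 1
          exact Finset.sum_congr rfl fun i _ => abs_sub_comm _ _
  have hgoalaux : τ * H tn x Z2 p - τ * H tn x Z1 p ≤ τ * (CH * ∑ i, |Z1 i - Z2 i|) := by
    calc τ * H tn x Z2 p - τ * H tn x Z1 p = τ * (H tn x Z2 p - H tn x Z1 p) := by ring
      _ ≤ τ * (CH * ∑ i, |Z1 i - Z2 i|) := mul_le_mul_of_nonneg_left hHb hτ.le
  have hC'nn : 0 ≤ (CH*K*M + 1) * τ * Real.sqrt τ :=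
    mul_nonneg (mul_nonneg (by linarith) hτ.le) hst0.le
  by_cases hcase : Real.sqrt τ * M ≤ 1
  · have hb1 : τ * (CH * ∑ i, |Z1 i - Z2 i|)
        = (Real.sqrt τ * CH) * (Real.sqrt τ * ∑ i, |Z1 i - Z2 i|) := by
      linear_combination (-(CH * ∑ i, |Z1 i - Z2 i|)) * hττ
    have hb2 : (Real.sqrt τ * CH) * (Real.sqrt τ * ∑ i, |Z1 i - Z2 i|)
        ≤ (Real.sqrt τ * CH) * ((|CSinv| * (d:ℝ))
            * ((∑ ω : Fin d → Bool, (φ1 (Xbar S τ x ω) - φ2 (Xbar S τ x ω))) / 2^d)) :=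
      mul_le_mul_of_nonneg_left hDb (mul_nonneg hst0.le hCH.le)
    have hb3 : Real.sqrt τ * (CH * (|CSinv| * (d:ℝ))) ≤ 1 := by
      have h4 : Real.sqrt τ * M = Real.sqrt τ * (CH * (|CSinv| * (d:ℝ))) + Real.sqrt τ := by
        rw [hMdef]; ring
      linarith [hst0.le]
    have hb4 : (Real.sqrt τ * CH) * ((|CSinv| * (d:ℝ))
          * ((∑ ω : Fin d → Bool, (φ1 (Xbar S τ x ω) - φ2 (Xbar S τ x ω))) / 2^d))
        ≤ (∑ ω : Fin d → Bool, (φ1 (Xbar S τ x ω) - φ2 (Xbar S τ x ω))) / 2^d := by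
      calc (Real.sqrt τ * CH) * ((|CSinv| * (d:ℝ))
            * ((∑ ω : Fin d → Bool, (φ1 (Xbar S τ x ω) - φ2 (Xbar S τ x ω))) / 2^d))
          = (Real.sqrt τ * (CH * (|CSinv| * (d:ℝ))))
            * ((∑ ω : Fin d → Bool, (φ1 (Xbar S τ x ω) - φ2 (Xbar S τ x ω))) / 2^d) := by ring
        _ ≤ 1 * ((∑ ω : Fin d → Bool, (φ1 (Xbar S τ x ω) - φ2 (Xbar S τ x ω))) / 2^d) :=
            mul_le_mul_of_nonneg_right hb3 (div_nonneg hA0 hpow.le)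
        _ = (∑ ω : Fin d → Bool, (φ1 (Xbar S τ x ω) - φ2 (Xbar S τ x ω))) / 2^d := one_mul _
    linarith [hgoalaux, hb1, hb2, hb4, hE, hC'nn]
  · push_neg at hcase
    have hb1 : τ * (CH * ∑ i, |Z1 i - Z2 i|) ≤ τ * (CH * K) :=
      mul_le_mul_of_nonneg_left (mul_le_mul_of_nonneg_left hDa hCH.le) hτ.le
    have hb2 : τ * (CH * K) ≤ (CH * K * M) * (τ * Real.sqrt τ) := by
      have h5 := mul_le_mul_of_nonneg_left hcase.le
        (mul_nonneg (mul_nonneg hτ.le hCH.le) hK0)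
      nlinarith [h5]
    have hE2 : 0 ≤ (∑ ω : Fin d → Bool, (φ1 (Xbar S τ x ω) - φ2 (Xbar S τ x ω))) / 2^d :=
      div_nonneg hA0 hpow.le
    linarith [hgoalaux, hb1, hb2, hE, hE2, mul_nonneg hτ.le hst0.le]
end
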